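/- Fix ε ∈ {1,-1}. Then every maximal solution γ(t) = (x(t), x̃(t), y(t)) of the system of ordinary differential equations x'' = 0, x̃'' = 2ε y x' y', y'' = -ε y (x')² is defined on all of ℝ. (These are the geodesic equations of the Lorentzian manifold S_ε, so S_+ and S_- are geodesically complete.) -/

import Mathlib

/-- Fundamental solutions of `u'' = k u` with standard initial data at `t₀`. -/
lemma exists_basis_ode (k t₀ : ℝ) :
    ∃ C S C' S' : ℝ → ℝ,
      (∀ t, HasDerivAt C (C' t) t) ∧ (∀ t, HasDerivAt C' (k * C t) t) ∧
      (∀ t, HasDerivAt S (S' t) t) ∧ (∀ t, HasDerivAt S' (k * S t) t) ∧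
      C t₀ = 1 ∧ C' t₀ = 0 ∧ S t₀ = 0 ∧ S' t₀ = 1 := by
  have hL : ∀ ω t : ℝ, HasDerivAt (fun s => ω * (s - t₀)) ω t := by
    intro ω t
    simpa using ((hasDerivAt_id t).sub_const t₀).const_mul ω
  rcases lt_trichotomy k 0 with hk | hk | hk
  · set ω : ℝ := Real.sqrt (-k) with hωdef
    have hω2 : ω ^ 2 = -k := Real.sq_sqrt (by linarith)
    have hω0 : ω ≠ 0 := by
      have : 0 < ω := Real.sqrt_pos.2 (by linarith)
      linarith
    refine ⟨fun t => Real.cos (ω * (t - t₀)), fun t => Real.sin (ω * (t - t₀)) / ω,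
      fun t => -ω * Real.sin (ω * (t - t₀)), fun t => Real.cos (ω * (t - t₀)),
      ?_, ?_, ?_, ?_, by simp, by simp, by simp, by simp [hω0]⟩
    · intro t
      have := (Real.hasDerivAt_cos (ω * (t - t₀))).comp t (hL ω t)
      refine this.congr_deriv ?_; ring
    · intro t
      have := ((Real.hasDerivAt_sin (ω * (t - t₀))).comp t (hL ω t)).const_mul (-ω)
      refine this.congr_deriv ?_
      have : k = -(ω ^ 2) := by linarith
      rw [this]; ring
    · intro t
      have := ((Real.hasDerivAt_sin (ω * (t - t₀))).comp t (hL ω t)).div_const ω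
      refine this.congr_deriv ?_
      field_simp
    · intro t
      have := (Real.hasDerivAt_cos (ω * (t - t₀))).comp t (hL ω t)
      refine this.congr_deriv ?_
      have hk' : k = -(ω ^ 2) := by linarith
      rw [hk']; field_simp
  · refine ⟨fun _ => 1, fun t => t - t₀, fun _ => 0, fun _ => 1,
      ?_, ?_, ?_, ?_, rfl, rfl, by simp, rfl⟩
    · intro t; simpa using hasDerivAt_const t (1 : ℝ)
    · intro t; simpa [hk] using hasDerivAt_const t (0 : ℝ)
    · intro t; simpa using (hasDerivAt_id t).sub_const t₀
    · intro t; simpa [hk] using hasDerivAt_const t (1 : ℝ)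
  · set ω : ℝ := Real.sqrt k with hωdef
    have hω2 : ω ^ 2 = k := Real.sq_sqrt (by linarith)
    have hω0 : ω ≠ 0 := by
      have : 0 < ω := Real.sqrt_pos.2 hk
      linarith
    refine ⟨fun t => Real.cosh (ω * (t - t₀)), fun t => Real.sinh (ω * (t - t₀)) / ω,
      fun t => ω * Real.sinh (ω * (t - t₀)), fun t => Real.cosh (ω * (t - t₀)),
      ?_, ?_, ?_, ?_, by simp, by simp, by simp, by simp [hω0]⟩
    · intro t
      have := (Real.hasDerivAt_cosh (ω * (t - t₀))).comp t (hL ω t)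
      refine this.congr_deriv ?_; ring
    · intro t
      have := ((Real.hasDerivAt_sinh (ω * (t - t₀))).comp t (hL ω t)).const_mul ω
      refine this.congr_deriv ?_
      rw [← hω2]; ring
    · intro t
      have := ((Real.hasDerivAt_sinh (ω * (t - t₀))).comp t (hL ω t)).div_const ω
      refine this.congr_deriv ?_
      field_simp
    · intro t
      have := (Real.hasDerivAt_cosh (ω * (t - t₀))).comp t (hL ω t)
      refine this.congr_deriv ?_
      rw [← hω2]; field_simp

/-- A function with vanishing derivative on an open convex set is constant there. -/
lemma eq_const_of_hasDerivAt_zero {I : Set ℝ} (hIopen : IsOpen I) (hconv : Convex ℝ I)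
    {f : ℝ → ℝ} (hf : ∀ t ∈ I, HasDerivAt f 0 t) {a b : ℝ} (ha : a ∈ I) (hb : b ∈ I) :
    f a = f b := by
  refine hconv.is_const_of_fderivWithin_eq_zero
    (fun t ht => (hf t ht).differentiableAt.differentiableWithinAt) (fun t ht => ?_) ha hb
  have h0 : fderivWithin ℝ f I t = ContinuousLinearMap.smulRight (1 : ℝ →L[ℝ] ℝ) (0 : ℝ) :=
    ((hf t ht).hasFDerivAt.hasFDerivWithinAt).fderivWithin (hIopen.uniqueDiffWithinAt ht)
  rw [h0]; ext; simp

/-- Geodesic completeness of the manifolds `S_ε` (`ε = ±1`): every maximal solution of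
the geodesic system `x'' = 0`, `x̃'' = 2ε y x' y'`, `y'' = -ε y (x')²` is defined on
all of `ℝ`.  Equivalently, every solution defined on an open interval `I` extends to a
solution defined on all of `ℝ`. -/
theorem S_eps_geodesically_complete
    (ε : ℝ) (hε : ε = 1 ∨ ε = -1)
    (I : Set ℝ) (hIopen : IsOpen I) (hIconn : I.OrdConnected)
    (x xt y x' xt' y' : ℝ → ℝ)
    (hx : ∀ t ∈ I, HasDerivAt x (x' t) t)
    (hx' : ∀ t ∈ I, HasDerivAt x' 0 t)
    (hxt : ∀ t ∈ I, HasDerivAt xt (xt' t) t)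
    (hxt' : ∀ t ∈ I, HasDerivAt xt' (2 * ε * y t * x' t * y' t) t)
    (hy : ∀ t ∈ I, HasDerivAt y (y' t) t)
    (hy' : ∀ t ∈ I, HasDerivAt y' (-(ε * y t * (x' t) ^ 2)) t) :
    ∃ X XT Yg X' XT' Y' : ℝ → ℝ,
      (∀ t, HasDerivAt X (X' t) t) ∧
      (∀ t, HasDerivAt X' 0 t) ∧
      (∀ t, HasDerivAt XT (XT' t) t) ∧
      (∀ t, HasDerivAt XT' (2 * ε * Yg t * X' t * Y' t) t) ∧
      (∀ t, HasDerivAt Yg (Y' t) t) ∧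
      (∀ t, HasDerivAt Y' (-(ε * Yg t * (X' t) ^ 2)) t) ∧
      (∀ t ∈ I, X t = x t ∧ XT t = xt t ∧ Yg t = y t) := by
  rcases Set.eq_empty_or_nonempty I with hI | ⟨t₀, ht₀⟩
  · exact ⟨0, 0, 0, 0, 0, 0,
      fun t => by simpa using hasDerivAt_const t (0:ℝ),
      fun t => hasDerivAt_const t (0:ℝ),
      fun t => by simpa using hasDerivAt_const t (0:ℝ),
      fun t => by simpa using hasDerivAt_const t (0:ℝ),
      fun t => by simpa using hasDerivAt_const t (0:ℝ),
      fun t => by simpa using hasDerivAt_const t (0:ℝ),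
      fun t ht => by simp [hI] at ht⟩
  have hconv : Convex ℝ I := convex_iff_ordConnected.2 hIconn
  have hconst : ∀ f : ℝ → ℝ, (∀ t ∈ I, HasDerivAt f 0 t) → ∀ t ∈ I, f t = f t₀ :=
    fun f hf t ht => eq_const_of_hasDerivAt_zero hIopen hconv hf ht ht₀
  set b : ℝ := x' t₀ with hbdef
  set k : ℝ := -(ε * b ^ 2) with hkdef
  -- x' is constant on I
  have hx'c : ∀ t ∈ I, x' t = b := hconst x' hx'
  obtain ⟨C, S, C', S', hC, hC', hS, hS', hC0, hC'0, hS0, hS'0⟩ := exists_basis_ode k t₀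
  set X : ℝ → ℝ := fun t => x t₀ + b * (t - t₀) with hXdef
  set Yg : ℝ → ℝ := fun t => y t₀ * C t + y' t₀ * S t with hYdef
  set Y' : ℝ → ℝ := fun t => y t₀ * C' t + y' t₀ * S' t with hY'def
  set XT' : ℝ → ℝ := fun t => xt' t₀ + ε * b * ((Yg t) ^ 2 - (Yg t₀) ^ 2) with hXT'def
  set XT : ℝ → ℝ := fun t => xt t₀ + ∫ s in t₀..t, XT' s with hXTdef
  have hYg : ∀ t, HasDerivAt Yg (Y' t) t := fun t =>
    ((hC t).const_mul (y t₀)).add ((hS t).const_mul (y' t₀))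
  have hYg' : ∀ t, HasDerivAt Y' (k * Yg t) t := by
    intro t
    have := ((hC' t).const_mul (y t₀)).add ((hS' t).const_mul (y' t₀))
    refine this.congr_deriv ?_
    simp only [hYdef]; ring
  have hYgcont : Continuous Yg := by
    have : Differentiable ℝ Yg := fun t => (hYg t).differentiableAt
    exact this.continuous
  have hXT'cont : Continuous XT' := by
    apply Continuous.add continuous_const
    exact continuous_const.mul ((hYgcont.pow 2).sub continuous_const)
  have hX : ∀ t, HasDerivAt X b t := by
    intro t
    have := (((hasDerivAt_id' t).sub_const t₀).const_mul b).const_add (x t₀)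
    simp only [mul_one] at this
    exact this
  have hXT : ∀ t, HasDerivAt XT (XT' t) t := by
    intro t
    exact ((hXT'cont.integral_hasStrictDerivAt t₀ t).hasDerivAt).const_add (xt t₀)
  have hXT'd : ∀ t, HasDerivAt XT' (2 * ε * Yg t * b * Y' t) t := by
    intro t
    have h1 : HasDerivAt (fun s => (Yg s) ^ 2) (2 * Yg t * Y' t) t := by
      exact HasDerivAt.congr_deriv ((hYg t).pow 2) (by norm_num)
    have := ((h1.sub_const ((Yg t₀) ^ 2)).const_mul (ε * b)).const_add (xt' t₀)
    refine this.congr_deriv ?_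
    ring
  -- values at t₀
  have hYgt₀ : Yg t₀ = y t₀ := by simp [hYdef, hC0, hS0]
  have hY't₀ : Y' t₀ = y' t₀ := by simp [hY'def, hC'0, hS'0]
  have hXt₀ : X t₀ = x t₀ := by simp [hXdef]
  have hXTt₀ : XT t₀ = xt t₀ := by simp [hXTdef]
  have hXT't₀ : XT' t₀ = xt' t₀ := by simp [hXT'def]
  -- y'' = k y on I
  have hyI : ∀ t ∈ I, HasDerivAt y' (k * y t) t := by
    intro t ht
    have := hy' t ht
    rw [hx'c t ht] at this
    convert this using 1
    rw [hkdef]; ring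
  -- Wronskian-type constants: u = y S' - y' S, v = y' C - y C'
  have hu : ∀ t ∈ I, y t * S' t - y' t * S t = y t₀ := by
    intro t ht
    have h := hconst (fun s => y s * S' s - y' s * S s) (fun s hs => by
      have := (((hy s hs).mul (hS' s)).sub ((hyI s hs).mul (hS s)))
      refine this.congr_deriv ?_
      ring)
    have := h t ht
    simpa [hS0, hS'0] using this
  have hv : ∀ t ∈ I, y' t * C t - y t * C' t = y' t₀ := by
    intro t ht
    have h := hconst (fun s => y' s * C s - y s * C' s) (fun s hs => by
      have := (((hyI s hs).mul (hC s)).sub ((hy s hs).mul (hC' s)))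
      refine this.congr_deriv ?_
      ring)
    have := h t ht
    simpa [hC0, hC'0] using this
  -- Wronskian of the basis is 1 everywhere
  have hW : ∀ t, C t * S' t - C' t * S t = 1 := by
    intro t
    have h := eq_const_of_hasDerivAt_zero isOpen_univ convex_univ
      (f := fun s => C s * S' s - C' s * S s) (fun s _ => by
        have := (((hC s).mul (hS' s)).sub ((hC' s).mul (hS s)))
        refine this.congr_deriv ?_
        ring) (Set.mem_univ t) (Set.mem_univ t₀)
    simpa [hC0, hC'0, hS0, hS'0] using h
  -- agreement of y and Yg on I
  have hyYg : ∀ t ∈ I, Yg t = y t := by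
    intro t ht
    have h1 := hu t ht
    have h2 := hv t ht
    have h3 := hW t
    simp only [hYdef]
    linear_combination (-(C t)) * h1 - S t * h2 + y t * h3
  have hy'Y' : ∀ t ∈ I, Y' t = y' t := by
    intro t ht
    have h1 := hu t ht
    have h2 := hv t ht
    have h3 := hW t
    simp only [hY'def]
    linear_combination (-(C' t)) * h1 - S' t * h2 + y' t * h3
  -- agreement of x and X on I
  have hxX : ∀ t ∈ I, X t = x t := by
    intro t ht
    have h := hconst (fun s => x s - X s) (fun s hs => by
      have := (hx s hs).sub (hX s)
      rw [hx'c s hs, sub_self] at this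
      exact this) t ht
    have : x t - X t = x t₀ - X t₀ := h
    rw [hXt₀] at this
    linarith
  -- agreement of xt' and XT' on I
  have hxt'XT' : ∀ t ∈ I, XT' t = xt' t := by
    intro t ht
    have h := hconst (fun s => xt' s - XT' s) (fun s hs => by
      have := (hxt' s hs).sub (hXT'd s)
      have e : 2 * ε * y s * x' s * y' s - 2 * ε * Yg s * b * Y' s = 0 := by
        rw [hyYg s hs, hy'Y' s hs, hx'c s hs]
        ring
      rw [e] at this
      exact this) t ht
    have : xt' t - XT' t = xt' t₀ - XT' t₀ := h
    rw [hXT't₀] at this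
    linarith
  -- agreement of xt and XT on I
  have hxtXT : ∀ t ∈ I, XT t = xt t := by
    intro t ht
    have h := hconst (fun s => xt s - XT s) (fun s hs => by
      have := (hxt s hs).sub (hXT s)
      rw [← hxt'XT' s hs, sub_self] at this
      exact this) t ht
    have : xt t - XT t = xt t₀ - XT t₀ := h
    rw [hXTt₀] at this
    linarith
  refine ⟨X, XT, Yg, fun _ => b, XT', Y', hX, fun t => hasDerivAt_const t b, hXT, ?_, hYg, ?_, ?_⟩
  · intro t; exact hXT'd t
  · intro t
    have := hYg' t
    convert this using 1
    rw [hkdef]; ring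
  · intro t ht
    exact ⟨hxX t ht, hxtXT t ht, hyYg t ht⟩
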